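/- arXiv:0807.4008 — 2 statements merged into one kernel-verified Lean document; each statement's English description precedes it below -/
import Mathlib

section
/- Distribution relation: let n ≥ 1 be an integer, s ∈ ℂ with Re s > 1, and let T ⊂ ℂ be a complete set of representatives of the quotient group ((1/n)·Γ)/Γ. Then ∑_{z∈T} ∑_{γ∈Γ∖{0}} ⟨γ,z⟩·|γ|^{−2s} = n^{2−2s}·∑_{γ∈Γ∖{0}} |γ|^{−2s}. -/
open Complex

/-- Distribution relation: for `Re s > 1` and `T` a complete set of representatives of
`((1/n)Γ)/Γ`, `∑_{z ∈ T} ∑_{γ ∈ Γ \ {0}} ⟨γ,z⟩ |γ|^(-2s) = n^(2-2s) ∑_{γ ∈ Γ \ {0}} |γ|^(-2s)`. -/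
theorem eisenstein_distribution_relation
    (ω₁ ω₂ : ℂ) (hindep : LinearIndependent ℝ ![ω₁, ω₂])
    (Γ : AddSubgroup ℂ) (hΓ : Γ = AddSubgroup.closure {ω₁, ω₂})
    (A : ℝ) (hA : A = |((starRingEnd ℂ) ω₁ * ω₂).im| / Real.pi)
    (pair : ℂ → ℂ → ℂ)
    (hpair : ∀ z w : ℂ, pair z w =
      Complex.exp ((z * (starRingEnd ℂ) w - w * (starRingEnd ℂ) z) / A))
    (n : ℕ) (hn : 1 ≤ n) (s : ℂ) (hs : 1 < s.re)
    (T : Finset ℂ)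
    (hT1 : ∀ z ∈ T, (n : ℂ) * z ∈ Γ)
    (hT2 : ∀ z ∈ T, ∀ w ∈ T, z - w ∈ Γ → z = w)
    (hT3 : ∀ z : ℂ, (n : ℂ) * z ∈ Γ → ∃ w ∈ T, z - w ∈ Γ) :
    ∑ z ∈ T, ∑' γ : {γ : ℂ // γ ∈ Γ ∧ γ ≠ 0},
        pair (γ : ℂ) z * ((‖(γ : ℂ)‖ : ℂ) ^ (-2 * s))
      = (n : ℂ) ^ (2 - 2 * s) *
          ∑' γ : {γ : ℂ // γ ∈ Γ ∧ γ ≠ 0}, (‖(γ : ℂ)‖ : ℂ) ^ (-2 * s) := by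
  classical
  have hnC : (n : ℂ) ≠ 0 := Nat.cast_ne_zero.mpr (by omega)
  -- nondegeneracy
  have he : ((starRingEnd ℂ) ω₁ * ω₂).im ≠ 0 := by
    rw [linearIndependent_fin2] at hindep
    simp only [Matrix.cons_val_one, Matrix.head_cons, Matrix.cons_val_zero] at hindep
    obtain ⟨h2, h1⟩ := hindep
    intro h
    have h2' : ω₂.re ^ 2 + ω₂.im ^ 2 ≠ 0 := by
      have := Complex.normSq_pos.mpr h2
      rw [Complex.normSq_apply] at this
      nlinarith
    apply h1 ((ω₁.re * ω₂.re + ω₁.im * ω₂.im) / (ω₂.re ^ 2 + ω₂.im ^ 2))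
    simp only [Complex.mul_im, Complex.conj_re, Complex.conj_im] at h
    apply Complex.ext <;>
      simp only [Complex.real_smul, Complex.mul_re, Complex.mul_im, Complex.ofReal_re,
        Complex.ofReal_im] <;> field_simp
    · linear_combination (-ω₂.im) * h
    · linear_combination ω₂.re * h
  -- lattice membership
  have memΓ : ∀ γ : ℂ, γ ∈ Γ ↔ ∃ p q : ℤ, γ = (p : ℂ) * ω₁ + (q : ℂ) * ω₂ := by
    intro γ
    subst hΓ
    rw [AddSubgroup.mem_closure_pair]
    constructor
    · rintro ⟨p, q, rfl⟩; exact ⟨p, q, by simp [zsmul_eq_mul]⟩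
    · rintro ⟨p, q, rfl⟩; exact ⟨p, q, by simp [zsmul_eq_mul]⟩
  -- uniqueness of coordinates
  have uniq : ∀ p q : ℤ, (p : ℂ) * ω₁ + (q : ℂ) * ω₂ = 0 → p = 0 ∧ q = 0 := by
    intro p q h
    have he' := he
    simp only [Complex.mul_im, Complex.conj_re, Complex.conj_im] at he'
    have hre := congrArg Complex.re h
    have him := congrArg Complex.im h
    simp only [Complex.add_re, Complex.add_im, Complex.mul_re, Complex.mul_im,
      Complex.intCast_re, Complex.intCast_im, Complex.zero_re, Complex.zero_im] at hre him
    have hp : (p : ℝ) * (ω₁.re * ω₂.im + -ω₁.im * ω₂.re) = 0 := by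
      linear_combination ω₂.im * hre - ω₂.re * him
    have hq : (q : ℝ) * (ω₁.re * ω₂.im + -ω₁.im * ω₂.re) = 0 := by
      linear_combination (-ω₁.im) * hre + ω₁.re * him
    constructor
    · have := (mul_eq_zero.mp hp).resolve_right he'
      exact_mod_cast this
    · have := (mul_eq_zero.mp hq).resolve_right he'
      exact_mod_cast this
  have coords : ∀ p q p' q' : ℤ,
      (p : ℂ) * ω₁ + (q : ℂ) * ω₂ = (p' : ℂ) * ω₁ + (q' : ℂ) * ω₂ → p = p' ∧ q = q' := by
    intro p q p' q' h
    have h0 : ((p - p' : ℤ) : ℂ) * ω₁ + ((q - q' : ℤ) : ℂ) * ω₂ = 0 := by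
      push_cast; linear_combination h
    obtain ⟨h1, h2⟩ := uniq _ _ h0
    omega
  -- the main pairing computation
  have hexp : ∀ (p q a b : ℤ) (m : ℕ), 0 < m →
      (pair ((p : ℂ) * ω₁ + (q : ℂ) * ω₂) (((a : ℂ) * ω₁ + (b : ℂ) * ω₂) / (m : ℂ)) = 1
        ↔ (m : ℤ) ∣ (a * q - b * p)) := by
    intro p q a b m hm
    set E : ℝ := ((starRingEnd ℂ) ω₁ * ω₂).im with hE
    set γ : ℂ := (p : ℂ) * ω₁ + (q : ℂ) * ω₂ with hγ
    set u : ℂ := (a : ℂ) * ω₁ + (b : ℂ) * ω₂ with hu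
    set ε : ℝ := if 0 < E then (1 : ℝ) else -1 with hεdef
    have hπ := Real.pi_pos
    have hm0 : (m : ℝ) ≠ 0 := by positivity
    have hEabs : |E| ≠ 0 := abs_ne_zero.mpr he
    have hnum : γ * (starRingEnd ℂ) u - u * (starRingEnd ℂ) γ
        = ((2 * (((a * q - b * p : ℤ) : ℝ) * E) : ℝ) : ℂ) * I := by
      have h1 : (starRingEnd ℂ) (u * (starRingEnd ℂ) γ) = (starRingEnd ℂ) u * γ := by
        rw [map_mul, Complex.conj_conj]
      have h2 : γ * (starRingEnd ℂ) u - u * (starRingEnd ℂ) γ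
          = -((u * (starRingEnd ℂ) γ) - (starRingEnd ℂ) (u * (starRingEnd ℂ) γ)) := by
        rw [h1]; ring
      rw [h2, Complex.sub_conj]
      have him : (u * (starRingEnd ℂ) γ).im = ((b * p - a * q : ℤ) : ℝ) * E := by
        rw [hu, hγ, hE]
        simp only [map_add, map_mul, map_intCast, Complex.mul_im, Complex.add_im,
          Complex.add_re, Complex.mul_re, Complex.conj_re, Complex.conj_im,
          Complex.intCast_re, Complex.intCast_im]
        push_cast
        ring
      rw [him]
      push_cast
      ring
    have harg : (γ * (starRingEnd ℂ) (u / (m : ℂ)) - (u / (m : ℂ)) * (starRingEnd ℂ) γ) / (A : ℂ)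
        = ((2 * Real.pi * (ε * ((a * q - b * p : ℤ) : ℝ)) / m : ℝ) : ℂ) * I := by
      have hcm : (starRingEnd ℂ) (u / (m : ℂ)) = (starRingEnd ℂ) u / (m : ℂ) := by
        rw [map_div₀, Complex.conj_natCast]
      rw [hcm]
      have h3 : γ * ((starRingEnd ℂ) u / (m : ℂ)) - u / (m : ℂ) * (starRingEnd ℂ) γ
          = (γ * (starRingEnd ℂ) u - u * (starRingEnd ℂ) γ) / (m : ℂ) := by ring
      rw [h3, hnum]
      have hreal : 2 * (((a * q - b * p : ℤ) : ℝ) * E) / (m * A)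
          = 2 * Real.pi * (ε * ((a * q - b * p : ℤ) : ℝ)) / m := by
        rcases lt_or_ge 0 E with hEpos | hEneg
        · rw [hεdef, if_pos hEpos, hA, abs_of_pos hEpos]
          field_simp
        · have hEneg' : E < 0 := lt_of_le_of_ne hEneg he
          rw [hεdef, if_neg (not_lt.mpr hEneg), hA, abs_of_neg hEneg']
          field_simp
      rw [← hreal]
      push_cast
      ring
    rw [hpair, harg, Complex.exp_eq_one_iff]
    constructor
    · rintro ⟨k, hk⟩
      have h' : ((2 * Real.pi * (ε * ((a * q - b * p : ℤ) : ℝ)) / m : ℝ) : ℂ) * I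
          = (((k : ℝ) * (2 * Real.pi) : ℝ) : ℂ) * I := by
        rw [hk]; push_cast; ring
      have h'' := mul_right_cancel₀ Complex.I_ne_zero h'
      have hR : 2 * Real.pi * (ε * ((a * q - b * p : ℤ) : ℝ)) / m = (k : ℝ) * (2 * Real.pi) :=
        Complex.ofReal_inj.mp h''
      rw [div_eq_iff hm0] at hR
      have h2π : (2 : ℝ) * Real.pi ≠ 0 := by positivity
      have hR2 : (ε * ((a * q - b * p : ℤ) : ℝ)) = (k : ℝ) * m := by
        apply mul_left_cancel₀ h2π
        linear_combination hR
      rcases lt_or_ge 0 E with hEpos | hEneg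
      · rw [hεdef, if_pos hEpos, one_mul] at hR2
        have : (a * q - b * p : ℤ) = k * m := by exact_mod_cast hR2
        exact ⟨k, by linear_combination this⟩
      · rw [hεdef, if_neg (not_lt.mpr hEneg), neg_one_mul] at hR2
        have : -(a * q - b * p : ℤ) = k * m := by exact_mod_cast hR2
        exact ⟨-k, by linear_combination -this⟩
    · rintro ⟨k, hk⟩
      rcases lt_or_ge 0 E with hEpos | hEneg
      · refine ⟨k, ?_⟩
        have hθ : 2 * Real.pi * (ε * ((a * q - b * p : ℤ) : ℝ)) / m = (k : ℝ) * (2 * Real.pi) := by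
          rw [hεdef, if_pos hEpos, one_mul, hk]
          push_cast
          field_simp
        rw [hθ]
        push_cast
        ring
      · refine ⟨-k, ?_⟩
        have hθ : 2 * Real.pi * (ε * ((a * q - b * p : ℤ) : ℝ)) / m
            = ((-k : ℤ) : ℝ) * (2 * Real.pi) := by
          rw [hεdef, if_neg (not_lt.mpr hEneg), neg_one_mul, hk]
          push_cast
          field_simp
        rw [hθ]
        push_cast
        ring
  -- trivial pairing on the lattice
  have pair1 : ∀ γ ∈ Γ, ∀ δ ∈ Γ, pair γ δ = 1 := by
    intro γ hγ δ hδ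
    obtain ⟨p, q, rfl⟩ := (memΓ γ).mp hγ
    obtain ⟨a, b, rfl⟩ := (memΓ δ).mp hδ
    have := (hexp p q a b 1 one_pos).mpr (one_dvd _)
    simpa using this
  have pair_add : ∀ g x y : ℂ, pair g (x + y) = pair g x * pair g y := by
    intro g x y
    rw [hpair, hpair, hpair, ← Complex.exp_add]
    congr 1
    rw [map_add, ← add_div]
    congr 1
    ring
  have pair_mod : ∀ γ ∈ Γ, ∀ x : ℂ, ∀ δ ∈ Γ, pair γ (x + δ) = pair γ x := by
    intro γ hγ x δ hδ
    rw [pair_add, pair1 γ hγ δ hδ, mul_one]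
  have pair_norm : ∀ g z : ℂ, ‖pair g z‖ = 1 := by
    intro g z
    rw [hpair, Complex.norm_exp]
    have hconj : z * (starRingEnd ℂ) g = (starRingEnd ℂ) (g * (starRingEnd ℂ) z) := by
      rw [map_mul, Complex.conj_conj]; ring
    have hre : ((g * (starRingEnd ℂ) z - z * (starRingEnd ℂ) g) / (A : ℂ)).re = 0 := by
      rw [Complex.div_ofReal_re, Complex.sub_re, hconj, Complex.conj_re, sub_self, zero_div]
    rw [hre, Real.exp_zero]
  -- representatives
  set rep : ℂ → ℂ := fun z => if h : ∃ w ∈ T, z - w ∈ Γ then h.choose else 0 with hrepdef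
  have hrep : ∀ z : ℂ, (n : ℂ) * z ∈ Γ → rep z ∈ T ∧ z - rep z ∈ Γ := by
    intro z hz
    have h := hT3 z hz
    simp only [hrepdef, dif_pos h]
    exact ⟨h.choose_spec.1, h.choose_spec.2⟩
  -- coordinates extractor
  set P : ℂ → ℤ × ℤ := fun g =>
    if h : ∃ pq : ℤ × ℤ, g = ((pq.1 : ℂ)) * ω₁ + ((pq.2 : ℂ)) * ω₂ then h.choose else 0
    with hPdef
  have hP : ∀ g ∈ Γ, g = (((P g).1 : ℂ)) * ω₁ + (((P g).2 : ℂ)) * ω₂ := by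
    intro g hg
    obtain ⟨p, q, hpq⟩ := (memΓ g).mp hg
    have h : ∃ pq : ℤ × ℤ, g = ((pq.1 : ℂ)) * ω₁ + ((pq.2 : ℂ)) * ω₂ := ⟨(p, q), hpq⟩
    simp only [hPdef, dif_pos h]
    exact h.choose_spec
  haveI : NeZero n := ⟨by omega⟩
  have zdvd : ∀ a : ℤ, (n : ℤ) ∣ a - (((a : ZMod n)).val : ℤ) := by
    intro a
    rw [← ZMod.intCast_zmod_eq_zero_iff_dvd]
    push_cast
    simp [ZMod.natCast_val, ZMod.intCast_cast, ZMod.cast_id]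
  -- cardinality of T
  have hcard : T.card = n ^ 2 := by
    haveI : NeZero n := ⟨by omega⟩
    have key : T.card = Fintype.card (ZMod n × ZMod n) := by
      rw [← Finset.card_univ]
      apply Finset.card_nbij'
        (i := fun t => ((((P ((n : ℂ) * t)).1 : ZMod n)), (((P ((n : ℂ) * t)).2 : ZMod n))))
        (j := fun ab => rep (((((ab.1.val : ℤ)) : ℂ) * ω₁ + (((ab.2.val : ℤ)) : ℂ) * ω₂) / (n : ℂ)))
      · intro t ht; exact Finset.mem_univ _
      · intro ab _
        have hz : (n : ℂ) * ((((ab.1.val : ℤ) : ℂ) * ω₁ + ((ab.2.val : ℤ) : ℂ) * ω₂) / (n : ℂ)) ∈ Γ := by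
          rw [mul_div_cancel₀ _ hnC]
          exact (memΓ _).mpr ⟨ab.1.val, ab.2.val, rfl⟩
        exact (hrep _ hz).1
      · -- left inverse
        intro t ht
        have htΓ := hT1 t ht
        have hPt := hP _ htΓ
        set p := (P ((n : ℂ) * t)).1 with hpdef
        set q := (P ((n : ℂ) * t)).2 with hqdef
        obtain ⟨c, hc⟩ := zdvd p
        obtain ⟨d, hd⟩ := zdvd q
        set a : ℤ := (((p : ZMod n)).val : ℤ) with hadef
        set b : ℤ := (((q : ZMod n)).val : ℤ) with hbdef
        set z : ℂ := (((a : ℂ)) * ω₁ + ((b : ℂ)) * ω₂) / (n : ℂ) with hzdef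
        have hnz : (n : ℂ) * z ∈ Γ := by
          rw [hzdef, mul_div_cancel₀ _ hnC]
          exact (memΓ _).mpr ⟨a, b, rfl⟩
        obtain ⟨hzT, hzΓ⟩ := hrep z hnz
        have hcC : (p : ℂ) - (a : ℂ) = (n : ℂ) * (c : ℂ) := by exact_mod_cast hc
        have hdC : (q : ℂ) - (b : ℂ) = (n : ℂ) * (d : ℂ) := by exact_mod_cast hd
        have hzt : z - t = ((-c : ℤ) : ℂ) * ω₁ + ((-d : ℤ) : ℂ) * ω₂ := by
          have h1 : (n : ℂ) * (z - t) = (n : ℂ) * (((-c : ℤ) : ℂ) * ω₁ + ((-d : ℤ) : ℂ) * ω₂) := by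
            rw [hzdef, mul_sub, mul_div_cancel₀ _ hnC, hPt]
            push_cast
            linear_combination (-ω₁) * hcC - ω₂ * hdC
          exact mul_left_cancel₀ hnC h1
        have hztΓ : z - t ∈ Γ := (memΓ _).mpr ⟨-c, -d, hzt⟩
        have htrep : t - rep z ∈ Γ := by
          have : t - rep z = (z - rep z) - (z - t) := by ring
          rw [this]
          exact AddSubgroup.sub_mem Γ hzΓ hztΓ
        exact (hT2 t ht (rep z) hzT htrep).symm
      · -- right inverse
        intro ab _
        set a : ℤ := (ab.1.val : ℤ) with hadef
        set b : ℤ := (ab.2.val : ℤ) with hbdef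
        set z : ℂ := (((a : ℂ)) * ω₁ + ((b : ℂ)) * ω₂) / (n : ℂ) with hzdef
        have hnz : (n : ℂ) * z ∈ Γ := by
          rw [hzdef, mul_div_cancel₀ _ hnC]
          exact (memΓ _).mpr ⟨a, b, rfl⟩
        obtain ⟨hzT, hzΓ⟩ := hrep z hnz
        have htΓ := hT1 _ hzT
        have hPt := hP _ htΓ
        set p := (P ((n : ℂ) * rep z)).1 with hpdef
        set q := (P ((n : ℂ) * rep z)).2 with hqdef
        obtain ⟨c, d, hcd⟩ := (memΓ _).mp hzΓ
        have heq : ((a : ℂ)) * ω₁ + ((b : ℂ)) * ω₂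
            = ((p + n * c : ℤ) : ℂ) * ω₁ + ((q + n * d : ℤ) : ℂ) * ω₂ := by
          have h1 : ((a : ℂ)) * ω₁ + ((b : ℂ)) * ω₂ = (n : ℂ) * z := by
            rw [hzdef, mul_div_cancel₀ _ hnC]
          rw [h1]
          have h2 : (n : ℂ) * z = (n : ℂ) * rep z + (n : ℂ) * (z - rep z) := by ring
          rw [h2, hcd, hPt]
          push_cast
          ring
        obtain ⟨h1, h2⟩ := coords _ _ _ _ heq
        have hfst : ((p : ZMod n)) = ab.1 := by
          have hp' : p = a - n * c := by omega
          rw [hp']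
          push_cast
          simp [ZMod.natCast_self, hadef, ZMod.natCast_val, ZMod.intCast_cast, ZMod.cast_id]
        have hsnd : ((q : ZMod n)) = ab.2 := by
          have hq' : q = b - n * d := by omega
          rw [hq']
          push_cast
          simp [ZMod.natCast_self, hbdef, ZMod.natCast_val, ZMod.intCast_cast, ZMod.cast_id]
        exact Prod.ext hfst hsnd
    rw [key]
    simp [ZMod.card, sq]
  -- character sum
  have charSum : ∀ γ : ℂ, γ ∈ Γ →
      ∑ z ∈ T, pair γ z = if ∃ δ ∈ Γ, γ = (n : ℂ) * δ then ((n : ℂ)) ^ 2 else 0 := by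
    classical
    intro γ hγ
    obtain ⟨p, q, hγpq⟩ := (memΓ γ).mp hγ
    by_cases hdvd : (n : ℤ) ∣ p ∧ (n : ℤ) ∣ q
    · obtain ⟨⟨c, hc⟩, ⟨d, hd⟩⟩ := hdvd
      rw [if_pos ⟨((c : ℂ)) * ω₁ + ((d : ℂ)) * ω₂, (memΓ _).mpr ⟨c, d, rfl⟩, by
        rw [hγpq, hc, hd]; push_cast; ring⟩]
      have hone : ∀ z ∈ T, pair γ z = 1 := by
        intro z hz
        have hswap : pair γ z = pair (((c : ℂ)) * ω₁ + ((d : ℂ)) * ω₂) ((n : ℂ) * z) := by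
          rw [hpair, hpair]
          congr 1
          rw [hγpq, hc, hd]
          simp only [map_mul, Complex.conj_natCast, map_add, map_intCast]
          push_cast
          ring
        rw [hswap]
        exact pair1 _ ((memΓ _).mpr ⟨c, d, rfl⟩) _ (hT1 z hz)
      rw [Finset.sum_congr rfl hone, Finset.sum_const, hcard]
      simp
    · rw [if_neg]
      swap
      · rintro ⟨δ, hδ, hγδ⟩
        obtain ⟨c, d, rfl⟩ := (memΓ δ).mp hδ
        have heq : ((p : ℂ)) * ω₁ + ((q : ℂ)) * ω₂ = ((n * c : ℤ) : ℂ) * ω₁ + ((n * d : ℤ) : ℂ) * ω₂ := by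
          rw [← hγpq, hγδ]; push_cast; ring
        obtain ⟨h1, h2⟩ := coords _ _ _ _ heq
        exact hdvd ⟨⟨c, by omega⟩, ⟨d, by omega⟩⟩
      -- find z₀ with nontrivial pairing
      obtain ⟨z₀, hz₀Γ, hz₀ne⟩ : ∃ z₀ : ℂ, (n : ℂ) * z₀ ∈ Γ ∧ pair γ z₀ ≠ 1 := by
        rcases not_and_or.mp hdvd with hp | hq
        · refine ⟨ω₂ / (n : ℂ), ?_, ?_⟩
          · rw [mul_div_cancel₀ _ hnC]
            exact (memΓ _).mpr ⟨0, 1, by push_cast; ring⟩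
          · intro h1
            apply hp
            have h2 : pair ((p : ℂ) * ω₁ + (q : ℂ) * ω₂)
                ((((0 : ℤ) : ℂ) * ω₁ + ((1 : ℤ) : ℂ) * ω₂) / (n : ℂ)) = 1 := by
              rw [← hγpq]
              convert h1 using 3
              push_cast
              ring
            have h3 := (hexp p q 0 1 n (by omega)).mp h2
            obtain ⟨k, hk⟩ := h3
            exact ⟨-k, by linear_combination -hk⟩
        · refine ⟨ω₁ / (n : ℂ), ?_, ?_⟩
          · rw [mul_div_cancel₀ _ hnC]
            exact (memΓ _).mpr ⟨1, 0, by push_cast; ring⟩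
          · intro h1
            apply hq
            have h2 : pair ((p : ℂ) * ω₁ + (q : ℂ) * ω₂)
                ((((1 : ℤ) : ℂ) * ω₁ + ((0 : ℤ) : ℂ) * ω₂) / (n : ℂ)) = 1 := by
              rw [← hγpq]
              convert h1 using 3
              push_cast
              ring
            have h3 := (hexp p q 1 0 n (by omega)).mp h2
            obtain ⟨k, hk⟩ := h3
            exact ⟨k, by linear_combination hk⟩
      -- permutation argument
      have hσ : ∀ z ∈ T, rep (z + z₀) ∈ T ∧ (z + z₀) - rep (z + z₀) ∈ Γ := fun z hz =>
        hrep _ (by rw [mul_add]; exact AddSubgroup.add_mem Γ (hT1 z hz) hz₀Γ)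
      have hτ : ∀ z ∈ T, rep (z - z₀) ∈ T ∧ (z - z₀) - rep (z - z₀) ∈ Γ := fun z hz =>
        hrep _ (by rw [mul_sub]; exact AddSubgroup.sub_mem Γ (hT1 z hz) hz₀Γ)
      have key : ∑ z ∈ T, pair γ (z + z₀) = ∑ z ∈ T, pair γ z := by
        refine Finset.sum_nbij' (i := fun z => rep (z + z₀)) (j := fun z => rep (z - z₀))
          (fun z hz => (hσ z hz).1) (fun z hz => (hτ z hz).1) ?_ ?_ ?_
        · intro z hz
          have h1 := (hσ z hz).2
          have h2 := (hτ _ (hσ z hz).1).2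
          have h3 : z - rep (rep (z + z₀) - z₀) ∈ Γ := by
            have h4 : z - rep (rep (z + z₀) - z₀) =
                ((z + z₀) - rep (z + z₀)) + ((rep (z + z₀) - z₀) - rep (rep (z + z₀) - z₀)) := by
              ring
            rw [h4]
            exact AddSubgroup.add_mem Γ h1 h2
          exact (hT2 z hz _ (hτ _ (hσ z hz).1).1 h3).symm
        · intro z hz
          have h1 := (hτ z hz).2
          have h2 := (hσ _ (hτ z hz).1).2
          have h3 : z - rep (rep (z - z₀) + z₀) ∈ Γ := by
            have h4 : z - rep (rep (z - z₀) + z₀) =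
                ((z - z₀) - rep (z - z₀)) + ((rep (z - z₀) + z₀) - rep (rep (z - z₀) + z₀)) := by
              ring
            rw [h4]
            exact AddSubgroup.add_mem Γ h1 h2
          exact (hT2 z hz _ (hσ _ (hτ z hz).1).1 h3).symm
        · intro z hz
          have h1 := (hσ z hz).2
          have hmem : rep (z + z₀) - (z + z₀) ∈ Γ := by
            have h2 : rep (z + z₀) - (z + z₀) = -((z + z₀) - rep (z + z₀)) := by ring
            rw [h2]; exact AddSubgroup.neg_mem Γ h1
          calc pair γ (z + z₀)
              = pair γ (z + z₀) * pair γ (rep (z + z₀) - (z + z₀)) := by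
                rw [pair1 γ hγ _ hmem, mul_one]
            _ = pair γ ((z + z₀) + (rep (z + z₀) - (z + z₀))) := (pair_add _ _ _).symm
            _ = pair γ (rep (z + z₀)) := by congr 1; ring
      have hsum0 : ∑ z ∈ T, pair γ (z + z₀) = pair γ z₀ * ∑ z ∈ T, pair γ z := by
        rw [Finset.mul_sum]
        exact Finset.sum_congr rfl fun z hz => by rw [pair_add, mul_comm]
      have h6 : pair γ z₀ * ∑ z ∈ T, pair γ z = ∑ z ∈ T, pair γ z := by rw [← hsum0, key]
      have h7 : (pair γ z₀ - 1) * ∑ z ∈ T, pair γ z = 0 := by linear_combination h6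
      rcases mul_eq_zero.mp h7 with h | h
      · exact absurd (sub_eq_zero.mp h) hz₀ne
      · exact h
  have hnormc : ∀ (z : ℂ) (γ : {γ : ℂ // γ ∈ Γ ∧ γ ≠ 0}),
      ‖pair (γ : ℂ) z * ((‖(γ : ℂ)‖ : ℂ) ^ (-2 * s))‖
        = ‖((‖(γ : ℂ)‖ : ℂ) ^ (-2 * s))‖ := by
    intro z γ
    rw [norm_mul, pair_norm, one_mul]
  have hsummEquiv : ∀ z : ℂ,
      Summable (fun γ : {γ : ℂ // γ ∈ Γ ∧ γ ≠ 0} =>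
        pair (γ : ℂ) z * ((‖(γ : ℂ)‖ : ℂ) ^ (-2 * s)))
      ↔ Summable (fun γ : {γ : ℂ // γ ∈ Γ ∧ γ ≠ 0} => (‖(γ : ℂ)‖ : ℂ) ^ (-2 * s)) := by
    intro z
    constructor
    · intro h
      rw [← summable_norm_iff]
      exact (summable_congr fun γ => (hnormc z γ)).mp h.norm
    · intro h
      rw [← summable_norm_iff]
      exact (summable_congr fun γ => (hnormc z γ).symm).mp h.norm
  by_cases hsum : Summable (fun γ : {γ : ℂ // γ ∈ Γ ∧ γ ≠ 0} =>
      (‖(γ : ℂ)‖ : ℂ) ^ (-2 * s))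
  · -- the embedding γ ↦ n γ
    have hmemmul : ∀ γ : {γ : ℂ // γ ∈ Γ ∧ γ ≠ 0}, (n : ℂ) * (γ : ℂ) ∈ Γ ∧ (n : ℂ) * (γ : ℂ) ≠ 0 :=
      fun γ => ⟨by
        have := AddSubgroup.nsmul_mem Γ γ.2.1 n
        rwa [nsmul_eq_mul] at this, mul_ne_zero hnC γ.2.2⟩
    set ι : {γ : ℂ // γ ∈ Γ ∧ γ ≠ 0} → {γ : ℂ // γ ∈ Γ ∧ γ ≠ 0} :=
      fun γ => ⟨(n : ℂ) * (γ : ℂ), hmemmul γ⟩ with hιdef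
    have hinj : Function.Injective ι := by
      intro x y h
      apply Subtype.ext
      have := congrArg Subtype.val h
      simp only [hιdef] at this
      exact mul_left_cancel₀ hnC this
    have hsupp : Function.support (fun γ : {γ : ℂ // γ ∈ Γ ∧ γ ≠ 0} =>
        (if ∃ δ ∈ Γ, (γ : ℂ) = (n : ℂ) * δ then ((n : ℂ)) ^ 2 else 0)
          * ((‖(γ : ℂ)‖ : ℂ) ^ (-2 * s))) ⊆ Set.range ι := by
      intro γ hγne
      by_cases h : ∃ δ ∈ Γ, (γ : ℂ) = (n : ℂ) * δ
      · obtain ⟨δ, hδ, hγδ⟩ := h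
        have hδ0 : δ ≠ 0 := by
          intro h0
          apply γ.2.2
          rw [hγδ, h0, mul_zero]
        exact ⟨⟨δ, hδ, hδ0⟩, Subtype.ext hγδ.symm⟩
      · simp only [Function.mem_support, if_neg h, zero_mul, ne_eq, not_true_eq_false] at hγne
    have hpow : (n : ℂ) ^ (2 - 2 * s) = (n : ℂ) ^ (2 : ℕ) * (n : ℂ) ^ (-2 * s) := by
      rw [show (2 - 2 * s : ℂ) = (2 : ℂ) + (-2 * s) by ring, Complex.cpow_add _ _ hnC,
        show ((2 : ℂ)) = ((2 : ℕ) : ℂ) by norm_num, Complex.cpow_natCast]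
    calc ∑ z ∈ T, ∑' γ : {γ : ℂ // γ ∈ Γ ∧ γ ≠ 0},
          pair (γ : ℂ) z * ((‖(γ : ℂ)‖ : ℂ) ^ (-2 * s))
        = ∑' γ : {γ : ℂ // γ ∈ Γ ∧ γ ≠ 0},
            ∑ z ∈ T, pair (γ : ℂ) z * ((‖(γ : ℂ)‖ : ℂ) ^ (-2 * s)) :=
          (Summable.tsum_finsetSum fun z _ => (hsummEquiv z).mpr hsum).symm
      _ = ∑' γ : {γ : ℂ // γ ∈ Γ ∧ γ ≠ 0},
            (if ∃ δ ∈ Γ, (γ : ℂ) = (n : ℂ) * δ then ((n : ℂ)) ^ 2 else 0)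
              * ((‖(γ : ℂ)‖ : ℂ) ^ (-2 * s)) := by
          refine tsum_congr fun γ => ?_
          rw [← Finset.sum_mul, charSum _ γ.2.1]
      _ = ∑' δ : {γ : ℂ // γ ∈ Γ ∧ γ ≠ 0},
            (if ∃ δ' ∈ Γ, ((ι δ : ℂ)) = (n : ℂ) * δ' then ((n : ℂ)) ^ 2 else 0)
              * ((‖(ι δ : ℂ)‖ : ℂ) ^ (-2 * s)) := (hinj.tsum_eq hsupp).symm
      _ = ∑' δ : {γ : ℂ // γ ∈ Γ ∧ γ ≠ 0},
            ((n : ℂ)) ^ (2 : ℕ) * ((n : ℂ) ^ (-2 * s) * ((‖(δ : ℂ)‖ : ℂ) ^ (-2 * s))) := by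
          refine tsum_congr fun δ => ?_
          have hif : (∃ δ' ∈ Γ, ((ι δ : ℂ)) = (n : ℂ) * δ') := ⟨(δ : ℂ), δ.2.1, rfl⟩
          rw [if_pos hif]
          have habs : ((‖(ι δ : ℂ)‖ : ℝ) : ℂ) ^ (-2 * s)
              = (n : ℂ) ^ (-2 * s) * ((‖(δ : ℂ)‖ : ℂ) ^ (-2 * s)) := by
            have h1 : ‖(ι δ : ℂ)‖ = (n : ℝ) * ‖(δ : ℂ)‖ := by
              simp only [hιdef, norm_mul, Complex.norm_natCast]
            rw [h1, Complex.ofReal_mul, mul_cpow_ofReal_nonneg (Nat.cast_nonneg n)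
              (norm_nonneg _), Complex.ofReal_natCast]
          rw [habs]
      _ = ((n : ℂ)) ^ (2 : ℕ) * ((n : ℂ) ^ (-2 * s)
            * ∑' δ : {γ : ℂ // γ ∈ Γ ∧ γ ≠ 0}, (‖(δ : ℂ)‖ : ℂ) ^ (-2 * s)) := by
          rw [tsum_mul_left, tsum_mul_left]
      _ = (n : ℂ) ^ (2 - 2 * s)
            * ∑' γ : {γ : ℂ // γ ∈ Γ ∧ γ ≠ 0}, (‖(γ : ℂ)‖ : ℂ) ^ (-2 * s) := by
          rw [hpow]; ring
  · have h0 : ∀ z ∈ T, ∑' γ : {γ : ℂ // γ ∈ Γ ∧ γ ≠ 0},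
        pair (γ : ℂ) z * ((‖(γ : ℂ)‖ : ℂ) ^ (-2 * s)) = 0 := fun z _ =>
      tsum_eq_zero_of_not_summable (fun hs' => hsum ((hsummEquiv z).mp hs'))
    rw [Finset.sum_eq_zero h0, tsum_eq_zero_of_not_summable hsum, mul_zero]
end

section
/- As real s tends to 1 from the right, (s−1)·∑_{γ∈Γ∖{0}} |γ|^{−2s} tends to 1/A; that is, the Eisenstein series ∑_{γ∈Γ∖{0}} |γ|^{−2s} has residue 1/A at s = 1. -/
open Complex Filter MeasureTheory Set Metric Bornology
open scoped ENNReal NNReal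


lemma lintegral_fun_norm_complex (f : ℝ → ℝ≥0∞) (hf : Measurable f) :
    ∫⁻ z : ℂ, f (‖z‖) = 2 * ENNReal.ofReal Real.pi * ∫⁻ r in Ioi (0:ℝ), ENNReal.ofReal r * f r := by
  have h1 : ∫⁻ z : ℂ, f (‖z‖) = ∫⁻ x : ({0}ᶜ : Set ℂ), f (‖x.1‖) ∂(volume.comap Subtype.val) := by
    rw [lintegral_subtype_comap (measurableSet_singleton _).compl fun z => f ‖z‖,
      restrict_compl_singleton]
  have h2 := (volume : Measure ℂ).measurePreserving_homeomorphUnitSphereProd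
  have hmeas : Measurable (fun p : (sphere (0:ℂ) 1 × Ioi (0:ℝ)) => f p.2) :=
    (hf.comp measurable_subtype_coe).comp measurable_snd
  have h3 : ∫⁻ x : ({0}ᶜ : Set ℂ), f (‖x.1‖) ∂(volume.comap Subtype.val)
      = ∫⁻ p : (sphere (0:ℂ) 1 × Ioi (0:ℝ)), f p.2
        ∂((volume : Measure ℂ).toSphere.prod (.volumeIoiPow (Module.finrank ℝ ℂ - 1))) := by
    rw [← h2.lintegral_comp hmeas]; simp [homeomorphUnitSphereProd]
  have h4 : ∫⁻ p : (sphere (0:ℂ) 1 × Ioi (0:ℝ)), f p.2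
        ∂((volume : Measure ℂ).toSphere.prod (.volumeIoiPow (Module.finrank ℝ ℂ - 1)))
      = (volume : Measure ℂ).toSphere univ *
        ∫⁻ r : Ioi (0:ℝ), f r ∂(Measure.volumeIoiPow (Module.finrank ℝ ℂ - 1)) := by
    rw [lintegral_prod _ hmeas.aemeasurable]
    simp [lintegral_const, mul_comm]
  have h5 : ∫⁻ r : Ioi (0:ℝ), f r ∂(Measure.volumeIoiPow (Module.finrank ℝ ℂ - 1))
      = ∫⁻ r in Ioi (0:ℝ), ENNReal.ofReal r * f r := by
    have hw := lintegral_withDensity_eq_lintegral_mul (Measure.comap Subtype.val volume)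
      (f := fun r : Ioi (0:ℝ) => ENNReal.ofReal (r.1 ^ (Module.finrank ℝ ℂ - 1)))
      ((measurable_subtype_coe.pow_const _).ennreal_ofReal) (hf.comp measurable_subtype_coe)
    simp only [Function.comp_def, Pi.mul_apply] at hw
    rw [Measure.volumeIoiPow]
    erw [hw]
    rw [lintegral_subtype_comap measurableSet_Ioi (fun r => ENNReal.ofReal (r ^ (Module.finrank ℝ ℂ - 1)) * f r)]
    refine setLIntegral_congr_fun measurableSet_Ioi (fun r hr => ?_)
    simp [Complex.finrank_real_complex]
  have h6 : (volume : Measure ℂ).toSphere univ = 2 * ENNReal.ofReal Real.pi := by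
    rw [Measure.toSphere_apply_univ, Complex.finrank_real_complex, Complex.volume_ball]
    rw [← NNReal.coe_real_pi, ENNReal.ofReal_coe_nnreal]
    simp [mul_comm]
  rw [h1, h3, h4, h5, h6]


lemma lintegral_tail_complex {s ρ : ℝ} (hs : 1 < s) (hρ : 0 < ρ) :
    ∫⁻ z : ℂ, (if ρ < ‖z‖ then ENNReal.ofReal (‖z‖ ^ (-2*s)) else 0)
      = ENNReal.ofReal (Real.pi * ρ ^ (2-2*s) / (s-1)) := by
  have hmeas : Measurable (fun r : ℝ => if ρ < r then ENNReal.ofReal (r ^ (-2*s)) else 0) := by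
    apply Measurable.ite (measurableSet_lt measurable_const measurable_id) ?_ measurable_const
    fun_prop
  rw [lintegral_fun_norm_complex _ hmeas]
  have h1 : ∫⁻ r in Ioi (0:ℝ), ENNReal.ofReal r *
      (if ρ < r then ENNReal.ofReal (r ^ (-2*s)) else 0)
      = ∫⁻ r in Ioi ρ, ENNReal.ofReal (r ^ (1-2*s)) := by
    rw [← lintegral_indicator measurableSet_Ioi, ← lintegral_indicator measurableSet_Ioi]
    refine lintegral_congr fun r => ?_
    by_cases h1 : ρ < r
    · have h0 : 0 < r := hρ.trans h1
      rw [indicator_of_mem (mem_Ioi.2 h0), indicator_of_mem (mem_Ioi.2 h1), if_pos h1,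
        ← ENNReal.ofReal_mul h0.le]
      congr 1
      rw [show (1:ℝ)-2*s = 1 + (-2*s) by ring, Real.rpow_add h0, Real.rpow_one]
    · rw [indicator_of_notMem (s := Ioi ρ) (by simpa using h1)]
      by_cases h0 : 0 < r
      · rw [indicator_of_mem (mem_Ioi.2 h0), if_neg h1, mul_zero]
      · rw [indicator_of_notMem (s := Ioi (0:ℝ)) (by simpa using h0)]
  rw [h1, ← ofReal_integral_eq_lintegral_ofReal
    (integrableOn_Ioi_rpow_of_lt (by linarith) hρ)
    ((ae_restrict_mem measurableSet_Ioi).mono fun r hr =>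
      Real.rpow_nonneg (le_of_lt (hρ.trans hr)) _),
    integral_Ioi_rpow_of_lt (by linarith) hρ]
  rw [show (2:ℝ≥0∞) = ENNReal.ofReal 2 by simp, ← ENNReal.ofReal_mul (by norm_num),
    ← ENNReal.ofReal_mul (by positivity)]
  congr 1
  rw [show (1:ℝ)-2*s+1 = 2-2*s by ring]
  have hs1 : s - 1 ≠ 0 := by linarith
  have h22 : (2:ℝ) - 2*s ≠ 0 := by linarith
  have h1s : (1:ℝ) - s ≠ 0 := by linarith
  field_simp
  ring


set_option maxHeartbeats 1000000 in
lemma measurable_cutoff (s ρ : ℝ) (c : ℂ) :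
    Measurable (fun x : ℂ => if ρ < ‖c + x‖ then ENNReal.ofReal (‖c + x‖ ^ (-2*s)) else 0) := by
  apply Measurable.ite
  · exact measurableSet_lt measurable_const (by fun_prop)
  · fun_prop
  · exact measurable_const

set_option maxHeartbeats 1000000 in
lemma eisenstein_key (b : Module.Basis (Fin 2) ℝ ℂ) :
    Tendsto (fun s : ℝ => (s - 1) *
        ∑' γ : {x : Submodule.span ℤ (Set.range ⇑b) // x ≠ 0}, ‖(γ.1 : ℂ)‖ ^ (-2 * s))
      (nhdsWithin 1 (Set.Ioi 1))
      (nhds (Real.pi / (volume (ZSpan.fundamentalDomain b)).toReal)) := by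
  classical
  set L := Submodule.span ℤ (Set.range ⇑b) with hLdef
  set F := ZSpan.fundamentalDomain b with hFdef
  have hFmeas : MeasurableSet F := ZSpan.fundamentalDomain_measurableSet b
  obtain ⟨d₀, hd₀⟩ := (ZSpan.fundamentalDomain_isBounded b).exists_norm_le
  set d := max d₀ 1 with hddef
  have hd1 : (1:ℝ) ≤ d := le_max_right _ _
  have hdpos : (0:ℝ) < d := lt_of_lt_of_le one_pos hd1
  have hdF : ∀ x ∈ F, ‖x‖ ≤ d := fun x hx => (hd₀ x hx).trans (le_max_left _ _)
  have hμF0 : volume F ≠ 0 := ZSpan.measure_fundamentalDomain_ne_zero b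
  have hμFtop : volume F ≠ ⊤ := ((ZSpan.fundamentalDomain_isBounded b).measure_lt_top).ne
  set V := (volume F).toReal with hVdef
  have hVpos : 0 < V := ENNReal.toReal_pos hμF0 hμFtop
  haveI : MeasurableVAdd L ℂ :=
    { measurable_const_vadd := fun c => (by
        have : (fun x : ℂ => c +ᵥ x) = fun x : ℂ => (c : ℂ) + x := rfl
        rw [this]; exact measurable_const_add _),
      measurable_vadd_const := fun x => (by
        have : (fun c : L => c +ᵥ x) = fun c : L => (c : ℂ) + x := rfl
        rw [this]; exact measurable_subtype_coe.add_const _) }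
  haveI : VAddInvariantMeasure L ℂ volume :=
    ⟨fun c s hs => by
      have : (fun x : ℂ => c +ᵥ x) ⁻¹' s = (fun x : ℂ => (c : ℂ) + x) ⁻¹' s := rfl
      rw [this, measure_preimage_add]⟩
  have hfund : IsAddFundamentalDomain L F volume := ZSpan.isAddFundamentalDomain b volume
  have hTsum : ∀ f : ℂ → ℝ≥0∞, ∫⁻ z, f z = ∑' γ : L, ∫⁻ x in F, f ((γ : ℂ) + x) := by
    intro f
    simpa [Submodule.vadd_def, vadd_eq_add] using hfund.lintegral_eq_tsum'' f
  -- abbreviations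
  set T : ℝ → ℝ≥0∞ := fun s => ∑' γ : {x : L // x ≠ 0}, ENNReal.ofReal (‖(γ.1 : ℂ)‖ ^ (-2*s))
    with hTdef
  set tf : ℝ → ℝ → L → ℝ≥0∞ := fun s R γ =>
    if R < ‖(γ : ℂ)‖ then ENNReal.ofReal (‖(γ : ℂ)‖ ^ (-2*s)) else 0 with htf
  set ff : ℝ → ℝ → L → ℝ≥0∞ := fun s R γ =>
    if (γ : ℂ) ≠ 0 ∧ ‖(γ : ℂ)‖ ≤ R then ENNReal.ofReal (‖(γ : ℂ)‖ ^ (-2*s)) else 0 with hff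
  set g : ℝ → L → ℝ≥0∞ := fun s γ => ∫⁻ x in F, ENNReal.ofReal (‖(γ : ℂ) + x‖ ^ (-2*s)) with hg
  set J : ℝ → ℝ → ℝ≥0∞ := fun s ρ => ∫⁻ z : ℂ, (if ρ < ‖z‖ then ENNReal.ofReal (‖z‖ ^ (-2*s)) else 0)
    with hJ
  -- splitting
  have h_split : ∀ s R : ℝ, 0 < R → T s = (∑' γ : L, ff s R γ) + ∑' γ : L, tf s R γ := by
    intro s R hR
    have e1 : T s = ∑' (γ : ↑{x : L | x ≠ 0}), ENNReal.ofReal (‖(γ.1 : ℂ)‖ ^ (-2*s)) := rfl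
    rw [e1, tsum_subtype {x : L | x ≠ 0} (fun γ => ENNReal.ofReal (‖(γ : ℂ)‖ ^ (-2*s))),
      ← ENNReal.tsum_add]
    refine tsum_congr fun γ => ?_
    by_cases hγ : γ = 0
    · subst hγ
      rw [indicator_of_notMem (by simp)]
      have h1 : ff s R 0 = 0 := by
        rw [hff]; simp
      have h2 : tf s R 0 = 0 := by
        rw [htf]
        simp only [ZeroMemClass.coe_zero, norm_zero]
        rw [if_neg (by linarith)]
      rw [h1, h2, add_zero]
    · rw [indicator_of_mem (by simpa using hγ)]
      have hγ' : (γ : ℂ) ≠ 0 := fun h => hγ (Subtype.ext h)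
      by_cases hle : ‖(γ : ℂ)‖ ≤ R
      · rw [hff, htf]
        simp only
        rw [if_pos ⟨hγ', hle⟩, if_neg (by simpa using hle), add_zero]
      · rw [hff, htf]
        simp only
        rw [if_neg (by tauto), if_pos (by simpa using hle), zero_add]
  -- finite part bound
  have hLclosed : IsClosed (L : Set ℂ) := by
    haveI : DiscreteTopology L.toAddSubgroup :=
      (inferInstance : DiscreteTopology (Submodule.span ℤ (Set.range ⇑b)).toAddSubgroup)
    exact AddSubgroup.isClosed_of_discrete (H := L.toAddSubgroup)
  have h_fin : ∀ R : ℝ, 0 < R → ∃ K : ℝ, 0 ≤ K ∧ ∀ s ∈ Ioo (1:ℝ) 2,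
      (∑' γ : L, ff s R γ) ≤ ENNReal.ofReal K := by
    intro R hR
    have hcpt : IsCompact ((L : Set ℂ) ∩ closedBall 0 R) :=
      (isCompact_closedBall (0:ℂ) R).inter_left hLclosed
    haveI hdisc2 : DiscreteTopology ((L : Set ℂ) ∩ closedBall 0 R : Set ℂ) :=
      DiscreteTopology.of_subset (show DiscreteTopology (L : Set ℂ) from inferInstanceAs (DiscreteTopology L))
        inter_subset_left
    have hfin' : ((L : Set ℂ) ∩ closedBall 0 R).Finite := hcpt.finite (isDiscrete_iff_discreteTopology.mpr hdisc2)
    have hfin : {γ : L | ‖(γ : ℂ)‖ ≤ R}.Finite := by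
      have hsub : {γ : L | ‖(γ : ℂ)‖ ≤ R} ⊆
          (fun γ : L => (γ : ℂ)) ⁻¹' ((L : Set ℂ) ∩ closedBall 0 R) := by
        intro γ hγ
        exact ⟨γ.2, by simpa [mem_closedBall, dist_eq_norm] using hγ⟩
      exact Finite.subset (Finite.preimage (injOn_of_injective Subtype.val_injective)
        hfin') hsub
    refine ⟨∑ γ ∈ hfin.toFinset, max 1 (‖(γ : ℂ)‖ ^ (-4:ℝ)), Finset.sum_nonneg
      (fun γ _ => le_trans zero_le_one (le_max_left _ _)), fun s hs => ?_⟩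
    have hterm : ∀ γ : L, ff s R γ ≤
        (if ‖(γ : ℂ)‖ ≤ R then ENNReal.ofReal (max 1 (‖(γ : ℂ)‖ ^ (-4:ℝ))) else 0) := by
      intro γ
      rw [hff]
      simp only
      by_cases hc : (γ : ℂ) ≠ 0 ∧ ‖(γ : ℂ)‖ ≤ R
      · rw [if_pos hc, if_pos hc.2]
        refine ENNReal.ofReal_le_ofReal ?_
        have hn : 0 < ‖(γ : ℂ)‖ := norm_pos_iff.2 hc.1
        rcases le_or_gt 1 ‖(γ : ℂ)‖ with h1 | h1
        · refine le_trans ?_ (le_max_left _ _)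
          calc ‖(γ : ℂ)‖ ^ (-2*s) ≤ ‖(γ : ℂ)‖ ^ (0:ℝ) :=
                Real.rpow_le_rpow_of_exponent_le h1 (by nlinarith [hs.1])
            _ = 1 := Real.rpow_zero _
        · refine le_trans ?_ (le_max_right _ _)
          exact Real.rpow_le_rpow_of_exponent_ge hn h1.le (by nlinarith [hs.2])
      · rw [if_neg hc]
        exact zero_le
    refine le_trans (ENNReal.tsum_le_tsum hterm) ?_
    rw [tsum_eq_sum (s := hfin.toFinset) (fun γ hγ => by
      rw [if_neg (by simpa using hγ)])]
    rw [ENNReal.ofReal_sum_of_nonneg (fun γ _ => le_trans zero_le_one (le_max_left _ _))]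
    refine Finset.sum_le_sum fun γ hγ => ?_
    rw [if_pos (by simpa using hγ)]
  -- tail bounds
  have hnormlow : ∀ (γ : L) (x : ℂ), x ∈ F → ‖(γ:ℂ)‖ - d ≤ ‖(γ:ℂ) + x‖ := by
    intro γ x hx
    have h1 : ‖(γ:ℂ)‖ ≤ ‖(γ:ℂ) + x‖ + ‖x‖ := by
      calc ‖(γ:ℂ)‖ = ‖((γ:ℂ) + x) - x‖ := by ring_nf
        _ ≤ ‖(γ:ℂ) + x‖ + ‖x‖ := norm_sub_le _ _
    have h2 : ‖x‖ ≤ d := hdF x hx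
    linarith
  have hnormup : ∀ (γ : L) (x : ℂ), x ∈ F → ‖(γ:ℂ) + x‖ ≤ ‖(γ:ℂ)‖ + d := by
    intro γ x hx
    exact (norm_add_le _ _).trans (by linarith [hdF x hx])
  have h_tail_up : ∀ s ∈ Ioo (1:ℝ) 2, ∀ R : ℝ, 2*d ≤ R →
      (∑' γ : L, tf s R γ) * volume F ≤ ENNReal.ofReal ((1+d/R) ^ (2*s)) * J s (R-d) := by
    intro s hs R hRd
    have hRpos : 0 < R := lt_of_lt_of_le (by linarith) hRd
    have h1d : 0 < 1 + d/R := by positivity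
    have hcell : ∀ γ : L, R < ‖(γ:ℂ)‖ →
        ENNReal.ofReal (‖(γ:ℂ)‖ ^ (-2*s)) * volume F
          ≤ ENNReal.ofReal ((1+d/R) ^ (2*s)) * g s γ := by
      intro γ hγ
      have hnpos : 0 < ‖(γ:ℂ)‖ := lt_trans hRpos hγ
      have hglow : ENNReal.ofReal (((1+d/R) * ‖(γ:ℂ)‖) ^ (-2*s)) * volume F ≤ g s γ := by
        rw [← setLIntegral_const F (ENNReal.ofReal (((1+d/R) * ‖(γ:ℂ)‖) ^ (-2*s)))]
        rw [hg]
        refine setLIntegral_mono (by fun_prop) fun x hx => ?_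
        refine ENNReal.ofReal_le_ofReal ?_
        have hub : ‖(γ:ℂ) + x‖ ≤ (1+d/R) * ‖(γ:ℂ)‖ := by
          have : d ≤ (d/R) * ‖(γ:ℂ)‖ := by
            calc d = (d/R) * R := by field_simp
              _ ≤ (d/R) * ‖(γ:ℂ)‖ := by
                refine mul_le_mul_of_nonneg_left hγ.le (by positivity)
          calc ‖(γ:ℂ) + x‖ ≤ ‖(γ:ℂ)‖ + d := hnormup γ x hx
            _ ≤ (1+d/R) * ‖(γ:ℂ)‖ := by nlinarith
        have hlb : 0 < ‖(γ:ℂ) + x‖ := by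
          have := hnormlow γ x hx
          have : R - d ≤ ‖(γ:ℂ) + x‖ := by linarith
          linarith
        exact Real.rpow_le_rpow_of_nonpos hlb hub (by nlinarith [hs.1])
      have key : ENNReal.ofReal (‖(γ:ℂ)‖ ^ (-2*s))
          = ENNReal.ofReal ((1+d/R) ^ (2*s)) * ENNReal.ofReal (((1+d/R) * ‖(γ:ℂ)‖) ^ (-2*s)) := by
        rw [← ENNReal.ofReal_mul (by positivity),
          Real.mul_rpow h1d.le hnpos.le, ← mul_assoc, ← Real.rpow_add h1d,
          show 2*s + -2*s = 0 by ring, Real.rpow_zero, one_mul]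
      rw [key, mul_assoc]
      exact mul_le_mul_right hglow _
    have hJup : (∑' γ : L, (if R < ‖(γ:ℂ)‖ then g s γ else 0)) ≤ J s (R-d) := by
      rw [hJ]
      simp only
      rw [hTsum (fun z => if R-d < ‖z‖ then ENNReal.ofReal (‖z‖ ^ (-2*s)) else 0)]
      refine ENNReal.tsum_le_tsum fun γ => ?_
      by_cases hγ : R < ‖(γ:ℂ)‖
      · rw [if_pos hγ, hg]
        simp only
        refine setLIntegral_mono (measurable_cutoff s (R-d) (γ:ℂ)) fun x hx => ?_
        rw [if_pos (by linarith [hnormlow γ x hx])]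
      · rw [if_neg hγ]
        exact zero_le
    calc (∑' γ : L, tf s R γ) * volume F = ∑' γ : L, tf s R γ * volume F :=
        ENNReal.tsum_mul_right.symm
      _ ≤ ∑' γ : L, ENNReal.ofReal ((1+d/R) ^ (2*s)) * (if R < ‖(γ:ℂ)‖ then g s γ else 0) := by
        refine ENNReal.tsum_le_tsum fun γ => ?_
        by_cases hγ : R < ‖(γ:ℂ)‖
        · rw [htf]
          simp only
          rw [if_pos hγ, if_pos hγ]
          exact hcell γ hγ
        · rw [htf]
          simp only
          rw [if_neg hγ, if_neg hγ, zero_mul, mul_zero]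
      _ = ENNReal.ofReal ((1+d/R) ^ (2*s)) * ∑' γ : L, (if R < ‖(γ:ℂ)‖ then g s γ else 0) :=
        ENNReal.tsum_mul_left
      _ ≤ ENNReal.ofReal ((1+d/R) ^ (2*s)) * J s (R-d) := mul_le_mul_right hJup _
  have h_tail_low : ∀ s ∈ Ioo (1:ℝ) 2, ∀ R : ℝ, 2*d ≤ R →
      ENNReal.ofReal ((1-d/R) ^ (2*s)) * J s (R+d) ≤ (∑' γ : L, tf s R γ) * volume F := by
    intro s hs R hRd
    have hRpos : 0 < R := lt_of_lt_of_le (by linarith) hRd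
    have hdR2 : d / R ≤ 1/2 := by
      rw [div_le_iff₀ hRpos]; linarith
    have h1d : 0 < 1 - d/R := by
      have : 0 < d / R := div_pos hdpos hRpos
      linarith
    have hcell : ∀ γ : L, R < ‖(γ:ℂ)‖ →
        ENNReal.ofReal ((1-d/R) ^ (2*s)) * g s γ
          ≤ ENNReal.ofReal (‖(γ:ℂ)‖ ^ (-2*s)) * volume F := by
      intro γ hγ
      have hnpos : 0 < ‖(γ:ℂ)‖ := lt_trans hRpos hγ
      have hgup : g s γ ≤ ENNReal.ofReal (((1-d/R) * ‖(γ:ℂ)‖) ^ (-2*s)) * volume F := by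
        rw [← setLIntegral_const F (ENNReal.ofReal (((1-d/R) * ‖(γ:ℂ)‖) ^ (-2*s))), hg]
        refine setLIntegral_mono (by fun_prop) fun x hx => ?_
        refine ENNReal.ofReal_le_ofReal ?_
        have hlb : (1-d/R) * ‖(γ:ℂ)‖ ≤ ‖(γ:ℂ) + x‖ := by
          have h1 : (d/R) * ‖(γ:ℂ)‖ ≥ (d/R) * R :=
            mul_le_mul_of_nonneg_left hγ.le (by positivity)
          have h2 : (d/R) * R = d := by field_simp
          have := hnormlow γ x hx
          nlinarith
        exact Real.rpow_le_rpow_of_nonpos (by positivity) hlb (by nlinarith [hs.1])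
      have key : ENNReal.ofReal ((1-d/R) ^ (2*s)) * ENNReal.ofReal (((1-d/R) * ‖(γ:ℂ)‖) ^ (-2*s))
          = ENNReal.ofReal (‖(γ:ℂ)‖ ^ (-2*s)) := by
        rw [← ENNReal.ofReal_mul (by positivity),
          Real.mul_rpow h1d.le hnpos.le, ← mul_assoc, ← Real.rpow_add h1d,
          show 2*s + -2*s = 0 by ring, Real.rpow_zero, one_mul]
      calc ENNReal.ofReal ((1-d/R) ^ (2*s)) * g s γ
          ≤ ENNReal.ofReal ((1-d/R) ^ (2*s)) *
            (ENNReal.ofReal (((1-d/R) * ‖(γ:ℂ)‖) ^ (-2*s)) * volume F) := mul_le_mul_right hgup _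
        _ = ENNReal.ofReal (‖(γ:ℂ)‖ ^ (-2*s)) * volume F := by rw [← mul_assoc, key]
    have hJlow : J s (R+d) ≤ ∑' γ : L, (if R < ‖(γ:ℂ)‖ then g s γ else 0) := by
      rw [hJ]
      simp only
      rw [hTsum (fun z => if R+d < ‖z‖ then ENNReal.ofReal (‖z‖ ^ (-2*s)) else 0)]
      refine ENNReal.tsum_le_tsum fun γ => ?_
      by_cases hγ : R < ‖(γ:ℂ)‖
      · rw [if_pos hγ, hg]
        simp only
        refine setLIntegral_mono (by fun_prop) fun x hx => ?_
        split
        · exact le_rfl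
        · exact zero_le
      · rw [if_neg hγ]
        have hzero : ∫⁻ x in F, (if R+d < ‖(γ:ℂ) + x‖ then ENNReal.ofReal (‖(γ:ℂ) + x‖ ^ (-2*s)) else 0)
            = ∫⁻ _x in F, (0:ℝ≥0∞) := by
          refine setLIntegral_congr_fun hFmeas (fun x hx => ?_)
          rw [if_neg (by push_neg at hγ ⊢; linarith [hnormup γ x hx])]
        rw [hzero, lintegral_zero]
    calc ENNReal.ofReal ((1-d/R) ^ (2*s)) * J s (R+d)
        ≤ ENNReal.ofReal ((1-d/R) ^ (2*s)) * ∑' γ : L, (if R < ‖(γ:ℂ)‖ then g s γ else 0) :=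
          mul_le_mul_right hJlow _
      _ = ∑' γ : L, ENNReal.ofReal ((1-d/R) ^ (2*s)) * (if R < ‖(γ:ℂ)‖ then g s γ else 0) :=
          ENNReal.tsum_mul_left.symm
      _ ≤ ∑' γ : L, tf s R γ * volume F := by
        refine ENNReal.tsum_le_tsum fun γ => ?_
        by_cases hγ : R < ‖(γ:ℂ)‖
        · rw [htf]
          simp only
          rw [if_pos hγ, if_pos hγ]
          exact hcell γ hγ
        · rw [htf]
          simp only
          rw [if_neg hγ, if_neg hγ, zero_mul, mul_zero]
      _ = (∑' γ : L, tf s R γ) * volume F := ENNReal.tsum_mul_right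
  -- value of J
  have hJval : ∀ s ∈ Ioo (1:ℝ) 2, ∀ ρ : ℝ, 0 < ρ →
      J s ρ = ENNReal.ofReal (Real.pi * ρ ^ (2-2*s) / (s-1)) := by
    intro s hs ρ hρ
    rw [hJ]
    exact lintegral_tail_complex hs.1 hρ
  -- tail finiteness
  have htail_fin : ∀ s ∈ Ioo (1:ℝ) 2, ∀ R : ℝ, 2*d ≤ R → (∑' γ : L, tf s R γ) ≠ ⊤ := by
    intro s hs R hRd
    intro htop
    have hRd' : 0 < R - d := by linarith [lt_of_lt_of_le (by linarith : d < 2*d) hRd]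
    have h1 := h_tail_up s hs R hRd
    rw [htop, ENNReal.top_mul hμF0, hJval s hs (R-d) hRd'] at h1
    exact (lt_of_le_of_lt h1 (by
      exact ENNReal.mul_lt_top ENNReal.ofReal_lt_top ENNReal.ofReal_lt_top)).ne rfl
  -- real-valued tail bounds
  have hmain : ∀ R : ℝ, 2*d ≤ R → ∃ K : ℝ, 0 ≤ K ∧ ∀ s ∈ Ioo (1:ℝ) 2,
      (1-d/R) ^ (2*s) * Real.pi * (R+d) ^ (2-2*s) / V ≤ (s-1) * (T s).toReal ∧
      (s-1) * (T s).toReal ≤ (1+d/R) ^ (2*s) * Real.pi * (R-d) ^ (2-2*s) / V + (s-1) * K := by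
    intro R hRd
    have hRpos : 0 < R := lt_of_lt_of_le (by linarith) hRd
    obtain ⟨K, hK0, hK⟩ := h_fin R hRpos
    refine ⟨K, hK0, fun s hs => ?_⟩
    have hs1 : 0 < s - 1 := by linarith [hs.1]
    have hRd' : 0 < R - d := by linarith
    have hRdp : 0 < R + d := by linarith
    have hdR2 : d / R ≤ 1/2 := by rw [div_le_iff₀ hRpos]; linarith
    have h1dm : 0 < 1 - d/R := by
      have : 0 < d / R := div_pos hdpos hRpos
      linarith
    have h1dp : 0 < 1 + d/R := by positivity
    have hfinne : (∑' γ : L, ff s R γ) ≠ ⊤ :=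
      (lt_of_le_of_lt (hK s hs) ENNReal.ofReal_lt_top).ne
    have htailne : (∑' γ : L, tf s R γ) ≠ ⊤ := htail_fin s hs R hRd
    have hTval : (T s).toReal = (∑' γ : L, ff s R γ).toReal + (∑' γ : L, tf s R γ).toReal := by
      rw [h_split s R hRpos, ENNReal.toReal_add hfinne htailne]
    -- upper bound for tail
    have hup : (∑' γ : L, tf s R γ).toReal * V
        ≤ (1+d/R) ^ (2*s) * (Real.pi * (R-d) ^ (2-2*s) / (s-1)) := by
      have h1 := h_tail_up s hs R hRd
      rw [hJval s hs (R-d) hRd', ← ENNReal.ofReal_mul (by positivity)] at h1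
      have h2 := ENNReal.toReal_mono ENNReal.ofReal_ne_top h1
      rw [ENNReal.toReal_mul, ENNReal.toReal_ofReal (by positivity)] at h2
      exact h2
    -- lower bound for tail
    have hlow : (1-d/R) ^ (2*s) * (Real.pi * (R+d) ^ (2-2*s) / (s-1))
        ≤ (∑' γ : L, tf s R γ).toReal * V := by
      have h1 := h_tail_low s hs R hRd
      rw [hJval s hs (R+d) hRdp, ← ENNReal.ofReal_mul (by positivity)] at h1
      have hne : (∑' γ : L, tf s R γ) * volume F ≠ ⊤ :=
        ENNReal.mul_ne_top htailne hμFtop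
      have h2 := ENNReal.toReal_mono hne h1
      rw [ENNReal.toReal_mul, ENNReal.toReal_ofReal (by positivity)] at h2
      exact h2
    have hfinR : 0 ≤ (∑' γ : L, ff s R γ).toReal := ENNReal.toReal_nonneg
    have hfinK : (∑' γ : L, ff s R γ).toReal ≤ K := by
      have := ENNReal.toReal_mono ENNReal.ofReal_ne_top (hK s hs)
      rwa [ENNReal.toReal_ofReal hK0] at this
    constructor
    · rw [hTval]
      have htail' : (1-d/R) ^ (2*s) * (Real.pi * (R+d) ^ (2-2*s) / (s-1)) / V
          ≤ (∑' γ : L, tf s R γ).toReal := by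
        rw [div_le_iff₀ hVpos]
        exact hlow
      have : (1-d/R) ^ (2*s) * Real.pi * (R+d) ^ (2-2*s) / V
          = (s-1) * ((1-d/R) ^ (2*s) * (Real.pi * (R+d) ^ (2-2*s) / (s-1)) / V) := by
        field_simp
      rw [this]
      have h3 : (s-1) * ((1-d/R) ^ (2*s) * (Real.pi * (R+d) ^ (2-2*s) / (s-1)) / V)
          ≤ (s-1) * (∑' γ : L, tf s R γ).toReal :=
        mul_le_mul_of_nonneg_left htail' hs1.le
      nlinarith
    · rw [hTval]
      have htail' : (∑' γ : L, tf s R γ).toReal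
          ≤ (1+d/R) ^ (2*s) * (Real.pi * (R-d) ^ (2-2*s) / (s-1)) / V := by
        rw [le_div_iff₀ hVpos]
        exact hup
      have h3 : (s-1) * (∑' γ : L, tf s R γ).toReal
          ≤ (s-1) * ((1+d/R) ^ (2*s) * (Real.pi * (R-d) ^ (2-2*s) / (s-1)) / V) :=
        mul_le_mul_of_nonneg_left htail' hs1.le
      have heq : (s-1) * ((1+d/R) ^ (2*s) * (Real.pi * (R-d) ^ (2-2*s) / (s-1)) / V)
          = (1+d/R) ^ (2*s) * Real.pi * (R-d) ^ (2-2*s) / V := by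
        field_simp
      rw [heq] at h3
      nlinarith [mul_le_mul_of_nonneg_left hfinK hs1.le]
  -- identify the real sum with toReal of T
  have hSreal : ∀ s : ℝ, 1 < s → s < 2 →
      (∑' γ : {x : L // x ≠ 0}, ‖(γ.1 : ℂ)‖ ^ (-2 * s)) = (T s).toReal := by
    intro s hs1 hs2
    rw [hTdef]
    rw [ENNReal.tsum_toReal_eq (fun γ => ENNReal.ofReal_ne_top)]
    exact (tsum_congr fun γ => (ENNReal.toReal_ofReal (Real.rpow_nonneg (norm_nonneg _) _)).symm)
  -- continuity helpers
  have hrpow_cont : ∀ c : ℝ, 0 < c → ∀ φ : ℝ → ℝ, ∀ l : ℝ,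
      Tendsto φ (nhdsWithin 1 (Ioi 1)) (nhds l) →
      Tendsto (fun s => c ^ (φ s)) (nhdsWithin 1 (Ioi 1)) (nhds (c ^ l)) := by
    intro c hc φ l hφ
    have hcont : ContinuousAt (fun p : ℝ × ℝ => p.1 ^ p.2) (c, l) :=
      Real.continuousAt_rpow (c, l) (Or.inl hc.ne')
    exact hcont.tendsto.comp (tendsto_const_nhds.prodMk_nhds hφ)
  have hφ1 : Tendsto (fun s : ℝ => 2*s) (nhdsWithin 1 (Ioi 1)) (nhds 2) := by
    have : Tendsto (fun s : ℝ => 2*s) (nhds 1) (nhds 2) := by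
      have := (continuous_const.mul continuous_id : Continuous fun s : ℝ => 2*s).tendsto (1:ℝ)
      convert this using 2 <;> norm_num
    exact this.mono_left nhdsWithin_le_nhds
  have hφ2 : Tendsto (fun s : ℝ => 2-2*s) (nhdsWithin 1 (Ioi 1)) (nhds 0) := by
    have : Tendsto (fun s : ℝ => 2-2*s) (nhds 1) (nhds 0) := by
      have := (continuous_const.sub (continuous_const.mul continuous_id) :
        Continuous fun s : ℝ => 2-2*s).tendsto (1:ℝ)
      convert this using 2 <;> norm_num
    exact this.mono_left nhdsWithin_le_nhds
  have hsm1 : Tendsto (fun s : ℝ => s - 1) (nhdsWithin 1 (Ioi 1)) (nhds 0) := by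
    have : Tendsto (fun s : ℝ => s - 1) (nhds 1) (nhds 0) := by
      have := (continuous_id.sub continuous_const : Continuous fun s : ℝ => s - 1).tendsto (1:ℝ)
      convert this using 2 <;> norm_num
    exact this.mono_left nhdsWithin_le_nhds
  -- main limit statement for (s-1) * (T s).toReal
  have hmainlim : Tendsto (fun s : ℝ => (s-1) * (T s).toReal) (nhdsWithin 1 (Ioi 1))
      (nhds (Real.pi / V)) := by
    rw [tendsto_order]
    constructor
    · intro a ha
      -- choose R with a < (1-d/R)^2 * π / V
      have hRlim : Tendsto (fun R : ℝ => (1-d/R) ^ (2:ℝ) * Real.pi / V) atTop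
          (nhds (Real.pi / V)) := by
        have h1 : Tendsto (fun R : ℝ => 1 - d/R) atTop (nhds 1) := by
          have h2 : Tendsto (fun R : ℝ => d/R) atTop (nhds 0) := by
            simpa [div_eq_mul_inv] using tendsto_inv_atTop_zero.const_mul d
          simpa using (tendsto_const_nhds.sub h2)
        have h3 : Tendsto (fun R : ℝ => (1-d/R) ^ (2:ℝ)) atTop (nhds ((1:ℝ) ^ (2:ℝ))) := by
          have hcont : ContinuousAt (fun p : ℝ × ℝ => p.1 ^ p.2) (1, 2) :=
            Real.continuousAt_rpow ((1:ℝ), (2:ℝ)) (Or.inl one_ne_zero)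
          exact hcont.tendsto.comp (h1.prodMk_nhds tendsto_const_nhds)
        rw [Real.one_rpow] at h3
        simpa using (h3.mul tendsto_const_nhds).div_const V
      have hev : ∀ᶠ R in (atTop : Filter ℝ), a < (1-d/R) ^ (2:ℝ) * Real.pi / V ∧ 2*d ≤ R :=
        (hRlim.eventually_const_lt ha).and (eventually_ge_atTop (2*d))
      obtain ⟨R, haR, hRd⟩ := hev.exists
      obtain ⟨K, hK0, hKb⟩ := hmain R hRd
      have hRpos : 0 < R := lt_of_lt_of_le (by linarith) hRd
      have hdR2 : d / R ≤ 1/2 := by rw [div_le_iff₀ hRpos]; linarith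
      have h1dm : 0 < 1 - d/R := by
        have : 0 < d / R := div_pos hdpos hRpos
        linarith
      have hRdp : 0 < R + d := by linarith
      -- tendsto of the lower bound function
      have hlolim : Tendsto (fun s : ℝ => (1-d/R) ^ (2*s) * Real.pi * (R+d) ^ (2-2*s) / V)
          (nhdsWithin 1 (Ioi 1)) (nhds ((1-d/R) ^ (2:ℝ) * Real.pi * (R+d) ^ (0:ℝ) / V)) :=
        (((hrpow_cont _ h1dm _ _ hφ1).mul tendsto_const_nhds).mul
          (hrpow_cont _ hRdp _ _ hφ2)).div_const V
      rw [Real.rpow_zero, mul_one] at hlolim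
      have hev2 : ∀ᶠ s : ℝ in nhdsWithin 1 (Ioi 1),
          a < (1-d/R) ^ (2*s) * Real.pi * (R+d) ^ (2-2*s) / V :=
        hlolim.eventually_const_lt haR
      have hev3 : ∀ᶠ s in nhdsWithin (1:ℝ) (Ioi 1), s ∈ Ioo (1:ℝ) 2 :=
        Ioo_mem_nhdsGT_of_mem ⟨le_refl 1, one_lt_two⟩
      filter_upwards [hev2, hev3] with s h2 h3
      exact lt_of_lt_of_le h2 (hKb s h3).1
    · intro a ha
      have hRlim : Tendsto (fun R : ℝ => (1+d/R) ^ (2:ℝ) * Real.pi / V) atTop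
          (nhds (Real.pi / V)) := by
        have h1 : Tendsto (fun R : ℝ => 1 + d/R) atTop (nhds 1) := by
          have h2 : Tendsto (fun R : ℝ => d/R) atTop (nhds 0) := by
            simpa [div_eq_mul_inv] using tendsto_inv_atTop_zero.const_mul d
          simpa using (tendsto_const_nhds.add h2)
        have h3 : Tendsto (fun R : ℝ => (1+d/R) ^ (2:ℝ)) atTop (nhds ((1:ℝ) ^ (2:ℝ))) := by
          have hcont : ContinuousAt (fun p : ℝ × ℝ => p.1 ^ p.2) (1, 2) :=
            Real.continuousAt_rpow ((1:ℝ), (2:ℝ)) (Or.inl one_ne_zero)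
          exact hcont.tendsto.comp (h1.prodMk_nhds tendsto_const_nhds)
        rw [Real.one_rpow] at h3
        simpa using (h3.mul tendsto_const_nhds).div_const V
      have hev : ∀ᶠ R in (atTop : Filter ℝ), (1+d/R) ^ (2:ℝ) * Real.pi / V < a ∧ 2*d ≤ R :=
        (hRlim.eventually_lt_const ha).and (eventually_ge_atTop (2*d))
      obtain ⟨R, haR, hRd⟩ := hev.exists
      obtain ⟨K, hK0, hKb⟩ := hmain R hRd
      have hRpos : 0 < R := lt_of_lt_of_le (by linarith) hRd
      have h1dp : 0 < 1 + d/R := by positivity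
      have hRdm : 0 < R - d := by linarith
      have hhilim : Tendsto
          (fun s : ℝ => (1+d/R) ^ (2*s) * Real.pi * (R-d) ^ (2-2*s) / V + (s-1) * K)
          (nhdsWithin 1 (Ioi 1)) (nhds ((1+d/R) ^ (2:ℝ) * Real.pi * (R-d) ^ (0:ℝ) / V + 0 * K)) :=
        ((((hrpow_cont _ h1dp _ _ hφ1).mul tendsto_const_nhds).mul
          (hrpow_cont _ hRdm _ _ hφ2)).div_const V).add (hsm1.mul tendsto_const_nhds)
      rw [Real.rpow_zero, mul_one, zero_mul, add_zero] at hhilim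
      have hev2 : ∀ᶠ s : ℝ in nhdsWithin 1 (Ioi 1),
          (1+d/R) ^ (2*s) * Real.pi * (R-d) ^ (2-2*s) / V + (s-1) * K < a :=
        hhilim.eventually_lt_const haR
      have hev3 : ∀ᶠ s in nhdsWithin (1:ℝ) (Ioi 1), s ∈ Ioo (1:ℝ) 2 :=
        Ioo_mem_nhdsGT_of_mem ⟨le_refl 1, one_lt_two⟩
      filter_upwards [hev2, hev3] with s h2 h3
      exact lt_of_le_of_lt (hKb s h3).2 h2
  -- conclude
  refine hmainlim.congr' ?_
  have hev3 : ∀ᶠ s in nhdsWithin (1:ℝ) (Ioi 1), s ∈ Ioo (1:ℝ) 2 :=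
    Ioo_mem_nhdsGT_of_mem ⟨le_refl 1, one_lt_two⟩
  filter_upwards [hev3] with s hssuffices
  rw [hSreal s hssuffices.1 hssuffices.2]


/-- The Eisenstein series `∑_{γ ∈ Γ \ {0}} |γ|^(-2s)` has residue `1/A` at `s = 1`:
`(s-1) ∑_{γ ∈ Γ \ {0}} |γ|^(-2s) → 1/A` as real `s → 1⁺`. -/
theorem eisenstein_residue_at_one
    (ω₁ ω₂ : ℂ) (hindep : LinearIndependent ℝ ![ω₁, ω₂])
    (Γ : AddSubgroup ℂ) (hΓ : Γ = AddSubgroup.closure {ω₁, ω₂})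
    (A : ℝ) (hA : A = |((starRingEnd ℂ) ω₁ * ω₂).im| / Real.pi) :
    Tendsto
      (fun s : ℝ => (s - 1) * ∑' γ : {γ : ℂ // γ ∈ Γ ∧ γ ≠ 0},
        ‖(γ : ℂ)‖ ^ (-2 * s))
      (nhdsWithin 1 (Set.Ioi 1)) (nhds (1 / A)) := by
  have hcard : Fintype.card (Fin 2) = Module.finrank ℝ ℂ := by
    simp [Complex.finrank_real_complex]
  set b : Module.Basis (Fin 2) ℝ ℂ := basisOfLinearIndependentOfCardEqFinrank hindep hcard with hbdef
  have hb : ⇑b = ![ω₁, ω₂] := coe_basisOfLinearIndependentOfCardEqFinrank hindep hcard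
  have hrange : Set.range ⇑b = {ω₁, ω₂} := by
    rw [hb]
    ext x
    simp [Matrix.range_cons, Matrix.range_empty]
    tauto
  have hL : ∀ z : ℂ, z ∈ Γ ↔ z ∈ Submodule.span ℤ (Set.range ⇑b) := by
    intro z
    rw [hΓ, hrange, ← Submodule.span_int_eq_addSubgroupClosure]
    rfl
  -- the equivalence of index types
  let e : {x : Submodule.span ℤ (Set.range ⇑b) // x ≠ 0} ≃ {γ : ℂ // γ ∈ Γ ∧ γ ≠ 0} :=
    { toFun := fun x => ⟨x.1.1, (hL _).2 x.1.2, fun h => x.2 (Subtype.ext h)⟩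
      invFun := fun γ => ⟨⟨γ.1, (hL _).1 γ.2.1⟩, by
        simp only [ne_eq, Subtype.ext_iff]
        exact_mod_cast γ.2.2⟩
      left_inv := fun x => by ext; rfl
      right_inv := fun γ => by ext; rfl }
  have hsum : ∀ s : ℝ, ∑' γ : {γ : ℂ // γ ∈ Γ ∧ γ ≠ 0}, ‖(γ : ℂ)‖ ^ (-2 * s)
      = ∑' γ : {x : Submodule.span ℤ (Set.range ⇑b) // x ≠ 0}, ‖(γ.1 : ℂ)‖ ^ (-2 * s) := by
    intro s
    rw [← e.tsum_eq]
    exact tsum_congr fun x => by simp [e]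
  -- compute the volume of the fundamental domain
  have hvol1 : volume (ZSpan.fundamentalDomain Complex.basisOneI) = 1 := by
    rw [measure_congr (ZSpan.fundamentalDomain_ae_parallelepiped Complex.basisOneI volume),
      ← Complex.toBasis_orthonormalBasisOneI]
    exact Complex.orthonormalBasisOneI.volume_parallelepiped
  have hdet : Complex.basisOneI.det ⇑b = ω₁.re * ω₂.im - ω₂.re * ω₁.im := by
    rw [Module.Basis.det_apply, Matrix.det_fin_two]
    simp [Module.Basis.toMatrix_apply, hb, Complex.coe_basisOneI_repr]
  have hvol : volume (ZSpan.fundamentalDomain b) = ENNReal.ofReal (Real.pi * A) := by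
    rw [ZSpan.measure_fundamentalDomain b volume Complex.basisOneI, hvol1, mul_one, hdet, hA]
    congr 1
    rw [mul_div_cancel₀ _ Real.pi_ne_zero]
    congr 1
    simp [Complex.mul_im]
    ring
  have hvolne : volume (ZSpan.fundamentalDomain b) ≠ 0 :=
    ZSpan.measure_fundamentalDomain_ne_zero b
  have hApos : 0 < A := by
    by_contra h
    push_neg at h
    rw [hvol] at hvolne
    exact hvolne (by
      simp [ENNReal.ofReal_eq_zero]
      nlinarith [Real.pi_pos])
  have hconst : Real.pi / (volume (ZSpan.fundamentalDomain b)).toReal = 1 / A := by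
    rw [hvol, ENNReal.toReal_ofReal (by positivity)]
    rw [div_mul_eq_div_div, div_self Real.pi_ne_zero]
  have := eisenstein_key b
  rw [hconst] at this
  refine this.congr fun s => ?_
  rw [hsum]
end
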